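/- Let s ≥ 2, and let G = ⟨h,g⟩ ≤ Sym(4s) with h = (1,2), g = (1,3,…,4s−1)(2,4,…,4s), and H = ⟨h, h^g, …, h^{g^{s−1}}⟩, R = ⟨a,b⟩ with a = (2s−1,2s)(4s−1,4s), b = gh. Then R ∩ H = 1 and |G| = |R|·|H|, so R is a right transversal of H in G. -/

import Mathlib

open Equiv

namespace Stmt9Aux

variable {m : ℕ}

lemma z2_add_self (x : ZMod 2) : x + x = 0 := by revert x; decide

lemma z2_cases (x : ZMod 2) : x = 0 ∨ x = 1 := by revert x; decide

/-- flip the second coordinate where `v` is 1 -/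
def E0 (v : ZMod m → ZMod 2) : Perm (ZMod m × ZMod 2) where
  toFun x := (x.1, x.2 + v x.1)
  invFun x := (x.1, x.2 + v x.1)
  left_inv x := by simp [add_assoc, z2_add_self]
  right_inv x := by simp [add_assoc, z2_add_self]

/-- shift the first coordinate by `k` -/
def B0 (k : ZMod m) : Perm (ZMod m × ZMod 2) where
  toFun x := (x.1 + k, x.2)
  invFun x := (x.1 - k, x.2)
  left_inv x := by simp
  right_inv x := by simp

@[simp] lemma E0_apply (v : ZMod m → ZMod 2) (x) : E0 v x = (x.1, x.2 + v x.1) := rfl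
@[simp] lemma B0_apply (k : ZMod m) (x) : B0 k x = (x.1 + k, x.2) := rfl

lemma E0_add (v w : ZMod m → ZMod 2) : E0 (v + w) = E0 v * E0 w := by
  ext x <;> simp [E0, Perm.mul_apply, Pi.add_apply] <;> ring

@[simp] lemma E0_zero : E0 (0 : ZMod m → ZMod 2) = 1 := by
  ext x <;> simp [E0]

lemma E0_mul_self (v : ZMod m → ZMod 2) : E0 v * E0 v = 1 := by
  rw [← E0_add]; have : v + v = 0 := by funext j; exact z2_add_self _
  rw [this, E0_zero]

@[simp] lemma E0_inv (v : ZMod m → ZMod 2) : (E0 v)⁻¹ = E0 v :=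
  inv_eq_of_mul_eq_one_right (E0_mul_self v)

lemma B0_add (k l : ZMod m) : B0 (k + l) = B0 k * B0 l := by
  ext x <;> simp [B0, Perm.mul_apply] <;> ring

@[simp] lemma B0_zero : B0 (0 : ZMod m) = 1 := by ext x <;> simp [B0]

@[simp] lemma B0_inv (k : ZMod m) : (B0 k)⁻¹ = B0 (-k) := by
  apply inv_eq_of_mul_eq_one_right
  rw [← B0_add, add_neg_cancel, B0_zero]

/-- shift of a vector -/
def sh (k : ZMod m) (v : ZMod m → ZMod 2) : ZMod m → ZMod 2 := fun j => v (j - k)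

lemma B0_mul_E0 (k : ZMod m) (v : ZMod m → ZMod 2) :
    B0 k * E0 v = E0 (sh k v) * B0 k := by
  ext x <;> simp [E0, B0, Perm.mul_apply, sh]

lemma conjE (c : ZMod m → ZMod 2) (k : ZMod m) (v : ZMod m → ZMod 2) :
    (E0 c * B0 k) * E0 v * (E0 c * B0 k)⁻¹ = E0 (sh k v) := by
  rw [mul_inv_rev, E0_inv, B0_inv]
  calc E0 c * B0 k * E0 v * (B0 (-k) * E0 c)
      = E0 c * (B0 k * E0 v) * B0 (-k) * E0 c := by group
    _ = E0 c * (E0 (sh k v) * B0 k) * B0 (-k) * E0 c := by rw [B0_mul_E0]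
    _ = E0 c * E0 (sh k v) * (B0 k * B0 (-k)) * E0 c := by group
    _ = E0 c * E0 (sh k v) * E0 c := by rw [← B0_add, add_neg_cancel, B0_zero]; group
    _ = E0 (c + sh k v + c) := by rw [E0_add, E0_add]
    _ = E0 (sh k v) := by
        congr 1; funext j; simp [Pi.add_apply]
        rw [add_comm (c j), add_assoc, z2_add_self, add_zero]

lemma EB_inj {v w : ZMod m → ZMod 2} {k l : ZMod m}
    (hvk : E0 v * B0 k = E0 w * B0 l) : v = w ∧ k = l := by
  have h1 : ∀ j : ZMod m, ((j + k : ZMod m), v (j + k)) = ((j + l : ZMod m), w (j + l)) := by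
    intro j
    have := DFunLike.congr_fun hvk (j, 0)
    simpa [Perm.mul_apply, E0, B0] using this
  have hk : k = l := by
    have h0 := h1 0
    have := congrArg Prod.fst h0
    simpa using this
  subst hk
  refine ⟨funext fun j => ?_, rfl⟩
  have := congrArg Prod.snd (h1 (j - k))
  simpa using this

lemma E0_inj {v w : ZMod m → ZMod 2} (hvw : E0 v = E0 w) : v = w := by
  have : E0 v * B0 0 = E0 w * B0 0 := by rw [hvw]
  exact (EB_inj this).1

/-- delta vector -/
def dl (c : ZMod m) : ZMod m → ZMod 2 := fun j => if j = c then 1 else 0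

lemma sh_dl (k c : ZMod m) : sh k (dl c) = dl (c + k) := by
  funext j; simp only [sh, dl]
  by_cases hj : j = c + k
  · subst hj; simp
  · rw [if_neg hj, if_neg (fun hc => hj (by rw [← hc]; ring))]

lemma E0_comm (v w : ZMod m → ZMod 2) : Commute (E0 v) (E0 w) := by
  unfold Commute SemiconjBy
  rw [← E0_add, ← E0_add, add_comm]

lemma E0_mem_of_sum {ι : Type*} (t : Finset ι) (f : ι → (ZMod m → ZMod 2))
    (S : Subgroup (Perm (ZMod m × ZMod 2))) (hf : ∀ i ∈ t, E0 (f i) ∈ S) :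
    E0 (∑ i ∈ t, f i) ∈ S := by
  classical
  induction t using Finset.induction_on with
  | empty => simpa using one_mem S
  | @insert a t' hni ih2 =>
      rw [Finset.sum_insert hni, E0_add]
      exact mul_mem (hf a (Finset.mem_insert_self _ _))
        (ih2 fun i hi => hf i (Finset.mem_insert_of_mem hi))

lemma B0_pow (n : ℕ) : (B0 (1 : ZMod m)) ^ n = B0 (n : ZMod m) := by
  induction n with
  | zero => simp
  | succ n ih => rw [pow_succ, ih, ← B0_add]; push_cast; ring_nf


lemma EB_mul {m : ℕ} (v w : ZMod m → ZMod 2) (k l : ZMod m) :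
    (E0 v * B0 k) * (E0 w * B0 l) = E0 (v + sh k w) * B0 (k + l) := by
  rw [E0_add, B0_add]
  calc E0 v * B0 k * (E0 w * B0 l) = E0 v * (B0 k * E0 w) * B0 l := by group
    _ = E0 v * (E0 (sh k w) * B0 k) * B0 l := by rw [B0_mul_E0]
    _ = E0 v * E0 (sh k w) * (B0 k * B0 l) := by group

section SDep
variable (s : ℕ)

local notation "Z" => ZMod (2*s)
local notation "MM" => ZMod (2*s) × ZMod 2

def h0 : Perm MM := E0 (dl 0)
def g0 : Perm MM := B0 1
def b0 : Perm MM := h0 s * g0 s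

def va : Z → ZMod 2 := dl ((s-1 : ℕ) : Z) + dl ((2*s-1 : ℕ) : Z)
def a0 : Perm MM := E0 (va s)

def ones : Z → ZMod 2 := fun _ => 1

/-- the "V" condition: periodic with period s -/
def Vp (v : Z → ZMod 2) : Prop := ∀ j : Z, v (j + (s : Z)) = v j

variable {s}

lemma Vp_add {v w : Z → ZMod 2} (hv : Vp s v) (hw : Vp s w) : Vp s (v + w) := by
  intro j; simp [Pi.add_apply, hv j, hw j]

lemma Vp_zero : Vp s 0 := fun _ => rfl

lemma Vp_ones : Vp s (ones s) := fun _ => rfl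

lemma Vp_sh {v : Z → ZMod 2} (hv : Vp s v) (k : Z) : Vp s (sh k v) := by
  intro j; simp only [sh]
  have : j + (s:Z) - k = (j - k) + (s:Z) := by ring
  rw [this, hv]

lemma s_add_s : ((s : Z) + s : Z) = 0 := by
  rw [← Nat.cast_add]
  have : s + s = 2 * s := by ring
  rw [this, ZMod.natCast_self]

lemma Vp_pair (c : Z) : Vp s (dl c + dl (c + (s:Z))) := by
  intro j; simp only [Pi.add_apply, dl]
  have e1 : (j + (s:Z) = c) ↔ (j = c + (s:Z)) := by
    constructor
    · intro hh; rw [← hh, add_assoc, s_add_s, add_zero]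
    · intro hh; rw [hh, add_assoc, s_add_s, add_zero]
  have e2 : (j + (s:Z) = c + (s:Z)) ↔ (j = c) := add_left_inj _
  rw [if_congr e1 rfl rfl, if_congr e2 rfl rfl, add_comm]

lemma va_eq : va s = dl ((s-1:ℕ):Z) + dl (((s-1:ℕ):Z) + (s:Z)) := by
  unfold va
  have h1 : (2*s-1:ℕ) = (s-1) + s := by omega
  rw [h1, Nat.cast_add]

lemma Vp_va : Vp s (va s) := by rw [va_eq]; exact Vp_pair _

lemma b0_eq : b0 s = E0 (dl 0) * B0 1 := rfl

lemma bpow_ex (n : ℕ) : ∃ c, b0 s ^ n = E0 c * B0 ((n:ℕ) : Z) := by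
  induction n with
  | zero => exact ⟨0, by simp⟩
  | succ n ih =>
      obtain ⟨c, hc⟩ := ih
      refine ⟨c + sh ((n:ℕ):Z) (dl 0), ?_⟩
      rw [pow_succ, hc, b0_eq, EB_mul]
      push_cast
      ring_nf

lemma b_conj_E (n : ℕ) (w : Z → ZMod 2) :
    b0 s ^ n * E0 w = E0 (sh ((n:ℕ):Z) w) * b0 s ^ n := by
  obtain ⟨c, hc⟩ := bpow_ex (s := s) n
  rw [hc]
  calc E0 c * B0 ((n:ℕ):Z) * E0 w = E0 c * (B0 ((n:ℕ):Z) * E0 w) := by group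
    _ = E0 c * (E0 (sh ((n:ℕ):Z) w) * B0 ((n:ℕ):Z)) := by rw [B0_mul_E0]
    _ = (E0 c * E0 (sh ((n:ℕ):Z) w)) * B0 ((n:ℕ):Z) := by group
    _ = (E0 (sh ((n:ℕ):Z) w) * E0 c) * B0 ((n:ℕ):Z) := by rw [(E0_comm _ _).eq]
    _ = E0 (sh ((n:ℕ):Z) w) * (E0 c * B0 ((n:ℕ):Z)) := by group

end SDep

/-- constructive power formula for `n ≤ 2s` -/
def chi (s : ℕ) (n : ℕ) : ZMod (2*s) → ZMod 2 := fun j => if j.val < n then 1 else 0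

section SDep2
variable {s : ℕ}
local notation "Z" => ZMod (2*s)
local notation "MM" => ZMod (2*s) × ZMod 2

lemma bpow_chi (hs : 2 ≤ s) : ∀ n, n ≤ 2*s → b0 s ^ n = E0 (chi s n) * B0 ((n:ℕ) : Z) := by
  haveI : NeZero (2*s) := ⟨by omega⟩
  intro n
  induction n with
  | zero =>
      intro _
      have : chi s 0 = 0 := by funext j; simp [chi]
      simp [this]
  | succ n ih =>
      intro hn
      rw [pow_succ, ih (by omega), b0_eq, EB_mul]
      have h1 : chi s n + sh ((n:ℕ):Z) (dl 0) = chi s (n+1) := by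
        rw [sh_dl, zero_add]
        funext j
        simp only [Pi.add_apply, chi, dl]
        have hj : j.val < 2*s := ZMod.val_lt j
        have hv : ((n:ℕ):Z).val = n % (2*s) := ZMod.val_natCast _ n
        by_cases he : j = ((n:ℕ):Z)
        · subst he
          rw [if_pos rfl]
          rw [hv] at *
          have hnn : n % (2*s) = n := Nat.mod_eq_of_lt (by omega)
          rw [if_neg (by omega), if_pos (by omega), zero_add]
        · rw [if_neg he]
          have hne : j.val ≠ n := by
            intro hcon
            exact he (by rw [← ZMod.natCast_rightInverse (n := 2*s) j, hcon])
          by_cases hlt : j.val < n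
          · rw [if_pos hlt, if_pos (by omega), add_zero]
          · rw [if_neg hlt, if_neg (by omega), add_zero]
      rw [h1]
      push_cast
      ring_nf

lemma b_two_s (hs : 2 ≤ s) : b0 s ^ (2*s) = E0 (ones s) := by
  haveI : NeZero (2*s) := ⟨by omega⟩
  rw [bpow_chi hs (2*s) le_rfl]
  have h1 : chi s (2*s) = ones s := by
    funext j; simp [chi, ones, ZMod.val_lt j]
  have h2 : (((2*s:ℕ)) : Z) = 0 := ZMod.natCast_self _
  rw [h1, h2, B0_zero, mul_one]

lemma b_four_s (hs : 2 ≤ s) : b0 s ^ (4*s) = 1 := by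
  have : 4*s = (2*s) * 2 := by ring
  rw [this, pow_mul, b_two_s hs, sq, ← E0_add]
  have h2 : ones s + ones s = 0 := by funext j; exact z2_add_self _
  rw [h2, E0_zero]

/-- reduce a power of b to canonical range, absorbing into a V-vector -/
lemma bred (hs : 2 ≤ s) (n : ℕ) : ∃ w, Vp s w ∧ b0 s ^ n = E0 w * b0 s ^ (n % (2*s)) := by
  have hdec : n = 2*s * (n / (2*s)) + n % (2*s) := (Nat.div_add_mod n (2*s)).symm
  set q := n / (2*s)
  rcases Nat.even_or_odd q with ⟨t, ht⟩ | ⟨t, ht⟩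
  · refine ⟨0, Vp_zero, ?_⟩
    rw [E0_zero, one_mul]
    conv_lhs => rw [hdec]
    rw [pow_add, ht]
    have : 2*s*(t+t) = (4*s)*t := by ring
    rw [this, pow_mul, b_four_s hs, one_pow, one_mul]
  · refine ⟨ones s, Vp_ones, ?_⟩
    conv_lhs => rw [hdec]
    rw [pow_add, ht]
    have : 2*s*(2*t+1) = (4*s)*t + 2*s := by ring
    rw [this, pow_add, pow_mul, b_four_s hs, one_pow, one_mul, b_two_s hs]


lemma conjE0 {k : ZMod (2*s)} {v : Z → ZMod 2} : B0 k * E0 v * (B0 k)⁻¹ = E0 (sh k v) := by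
  rw [B0_mul_E0, mul_assoc, mul_inv_cancel, mul_one]

lemma b_conj_E' (n : ℕ) (w : Z → ZMod 2) :
    b0 s ^ n * E0 w * (b0 s ^ n)⁻¹ = E0 (sh ((n:ℕ):Z) w) := by
  rw [b_conj_E, mul_assoc, mul_inv_cancel, mul_one]

lemma sh_add (k : ZMod (2*s)) (v w : Z → ZMod 2) : sh k (v + w) = sh k v + sh k w := rfl

lemma g0_pow (n : ℕ) : g0 s ^ n = B0 ((n:ℕ) : Z) := B0_pow n

lemma gen_eq (n : ℕ) : g0 s ^ n * h0 s * (g0 s ^ n)⁻¹ = E0 (dl ((n:ℕ):Z)) := by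
  rw [g0_pow]
  show B0 _ * E0 (dl 0) * _ = _
  rw [conjE0, sh_dl, zero_add]

end SDep2

section Subgroups
variable (s : ℕ)
local notation "Z" => ZMod (2*s)
local notation "MM" => ZMod (2*s) × ZMod 2

def Gsub : Subgroup (Perm MM) where
  carrier := {x | ∃ v k, x = E0 v * B0 k}
  one_mem' := ⟨0, 0, by simp⟩
  mul_mem' := by rintro x y ⟨v, k, rfl⟩ ⟨w, l, rfl⟩; exact ⟨_, _, EB_mul v w k l⟩
  inv_mem' := by
    rintro x ⟨v, k, rfl⟩
    refine ⟨sh (-k) v, -k, ?_⟩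
    rw [mul_inv_rev, B0_inv, E0_inv, B0_mul_E0]

def Hsub : Subgroup (Perm MM) where
  carrier := {x | ∃ v, (∀ j : Z, s ≤ j.val → v j = 0) ∧ x = E0 v}
  one_mem' := ⟨0, fun _ _ => rfl, E0_zero.symm⟩
  mul_mem' := by
    rintro x y ⟨v, hv, rfl⟩ ⟨w, hw, rfl⟩
    exact ⟨v + w, fun j hj => by simp [Pi.add_apply, hv j hj, hw j hj], (E0_add v w).symm⟩
  inv_mem' := by rintro x ⟨v, hv, rfl⟩; exact ⟨v, hv, E0_inv v⟩

def Rsub (hs : 2 ≤ s) : Subgroup (Perm MM) where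
  carrier := {x | ∃ v n, Vp s v ∧ n < 2*s ∧ x = E0 v * b0 s ^ n}
  one_mem' := ⟨0, 0, Vp_zero, by omega, by simp⟩
  mul_mem' := by
    rintro x y ⟨v, n, hv, hn, rfl⟩ ⟨w, p, hw, hp, rfl⟩
    obtain ⟨w', hw', hred⟩ := bred hs (n + p)
    refine ⟨v + sh ((n:ℕ):Z) w + w', (n + p) % (2*s), Vp_add (Vp_add hv (Vp_sh hw _)) hw',
      Nat.mod_lt _ (by omega), ?_⟩
    calc E0 v * b0 s ^ n * (E0 w * b0 s ^ p)
        = E0 v * (b0 s ^ n * E0 w) * b0 s ^ p := by group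
      _ = E0 v * (E0 (sh ((n:ℕ):Z) w) * b0 s ^ n) * b0 s ^ p := by rw [b_conj_E]
      _ = (E0 v * E0 (sh ((n:ℕ):Z) w)) * b0 s ^ (n + p) := by rw [pow_add]; group
      _ = E0 (v + sh ((n:ℕ):Z) w) * (E0 w' * b0 s ^ ((n+p) % (2*s))) := by
          rw [E0_add, hred]
      _ = E0 (v + sh ((n:ℕ):Z) w + w') * b0 s ^ ((n+p) % (2*s)) := by
          rw [E0_add (v + sh ((n:ℕ):Z) w) w']; group
  inv_mem' := by
    rintro x ⟨v, n, hv, hn, rfl⟩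
    obtain ⟨w', hw', hred⟩ := bred hs (4*s - n)
    have hbinv : (b0 s ^ n)⁻¹ = b0 s ^ (4*s - n) := by
      apply inv_eq_of_mul_eq_one_right
      rw [← pow_add]
      have : n + (4*s - n) = 4*s := by omega
      rw [this, b_four_s hs]
    refine ⟨sh (((4*s - n : ℕ)):Z) v + w', (4*s - n) % (2*s),
      Vp_add (Vp_sh hv _) hw', Nat.mod_lt _ (by omega), ?_⟩
    rw [mul_inv_rev, E0_inv, hbinv]
    calc b0 s ^ (4*s-n) * E0 v = E0 (sh (((4*s-n:ℕ)):Z) v) * b0 s ^ (4*s-n) := by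
          rw [b_conj_E]
      _ = E0 (sh (((4*s-n:ℕ)):Z) v) * (E0 w' * b0 s ^ ((4*s-n) % (2*s))) := by rw [hred]
      _ = E0 (sh (((4*s-n:ℕ)):Z) v + w') * b0 s ^ ((4*s-n) % (2*s)) := by
          rw [E0_add]; group

variable {s}

lemma Rsub_le_Gsub (hs : 2 ≤ s) : Rsub s hs ≤ Gsub s := by
  rintro x ⟨v, n, _, _, rfl⟩
  obtain ⟨c, hc⟩ := bpow_ex (s := s) n
  exact ⟨v + c, ((n:ℕ):Z), by rw [hc, ← mul_assoc, ← E0_add]⟩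

lemma Hsub_le_Gsub : Hsub s ≤ Gsub s := by
  rintro x ⟨v, _, rfl⟩
  exact ⟨v, 0, by simp⟩

lemma RH_bot (hs : 2 ≤ s) : Rsub s hs ⊓ Hsub s = ⊥ := by
  haveI : NeZero (2*s) := ⟨by omega⟩
  rw [Subgroup.eq_bot_iff_forall]
  rintro x ⟨⟨v, n, hVp, hn, rfl⟩, ⟨w, hsupp, heq⟩⟩
  obtain ⟨c, hc⟩ := bpow_ex (s := s) n
  have heq2 : E0 (v + c) * B0 ((n:ℕ):Z) = E0 w * B0 0 := by
    rw [B0_zero, mul_one, ← heq, hc, ← mul_assoc, ← E0_add]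
  obtain ⟨hvc, hn0⟩ := EB_inj heq2
  have hn' : n = 0 := by
    have := congrArg ZMod.val hn0
    rwa [ZMod.val_cast_of_lt hn, ZMod.val_zero] at this
  subst hn'
  rw [pow_zero, mul_one] at heq ⊢
  have hvw : v = w := E0_inj heq
  subst hvw
  have hv0 : v = 0 := by
    funext j
    by_cases hj : s ≤ j.val
    · exact hsupp j hj
    · have h1 := hVp j
      have h2 : s ≤ (j + (s:Z)).val := by
        rw [ZMod.val_add, ZMod.val_cast_of_lt (by omega : s < 2*s)]
        have : (j.val + s) % (2*s) = j.val + s := Nat.mod_eq_of_lt (by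
          have := ZMod.val_lt j; omega)
        omega
      rw [hsupp _ h2] at h1
      exact h1.symm
  rw [hv0, E0_zero]


lemma vsum [NeZero (2*s)] (v : Z → ZMod 2) :
    v = ∑ j : Z, (fun i => v j * dl j i) := by
  funext i
  rw [Finset.sum_apply]
  rw [Finset.sum_eq_single i]
  · simp [dl]
  · intro j _ hji
    simp [dl, Ne.symm hji]
  · intro hi; exact absurd (Finset.mem_univ i) hi

lemma E0_dl_mem [NeZero (2*s)] (S : Subgroup (Perm MM)) (hh0 : h0 s ∈ S) (hg0 : g0 s ∈ S)
    (j : Z) : E0 (dl j) ∈ S := by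
  have hcast : ((j.val : ℕ) : Z) = j := ZMod.natCast_rightInverse j
  have hgen := gen_eq (s := s) j.val
  rw [hcast] at hgen
  rw [← hgen]
  exact mul_mem (mul_mem (pow_mem hg0 _) hh0) (inv_mem (pow_mem hg0 _))

lemma E0_mem_of_forall_dl [NeZero (2*s)] (S : Subgroup (Perm MM)) (v : Z → ZMod 2)
    (hdl : ∀ j : Z, v j = 1 → E0 (dl j) ∈ S) : E0 v ∈ S := by
  rw [vsum v]
  apply E0_mem_of_sum
  intro j _
  rcases z2_cases (v j) with h0 | h1
  · have : (fun i => v j * dl j i) = 0 := by funext i; rw [h0, zero_mul]; rfl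
    rw [this, E0_zero]; exact one_mem S
  · have : (fun i => v j * dl j i) = dl j := by funext i; rw [h1, one_mul]
    rw [this]; exact hdl j h1

lemma Gu_eq (hs : 2 ≤ s) : Subgroup.closure {h0 s, g0 s} = Gsub s := by
  haveI : NeZero (2*s) := ⟨by omega⟩
  apply le_antisymm
  · rw [Subgroup.closure_le]
    rintro x (rfl | rfl)
    · exact ⟨dl 0, 0, by simp [h0]⟩
    · exact ⟨0, 1, by simp [g0]⟩
  · rintro x ⟨v, k, rfl⟩
    have hh : h0 s ∈ Subgroup.closure {h0 s, g0 s} :=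
      Subgroup.subset_closure (by left; rfl)
    have hg : g0 s ∈ Subgroup.closure {h0 s, g0 s} :=
      Subgroup.subset_closure (by right; rfl)
    apply mul_mem
    · exact E0_mem_of_forall_dl _ v (fun j _ => E0_dl_mem _ hh hg j)
    · have : B0 k = g0 s ^ k.val := by
        rw [g0_pow, ZMod.natCast_rightInverse k]
      rw [this]; exact pow_mem hg _

lemma Hu_eq (hs : 2 ≤ s) :
    Subgroup.closure {x : Perm MM | ∃ i : Fin s, x = g0 s ^ (i:ℕ) * h0 s * (g0 s ^ (i:ℕ))⁻¹}
      = Hsub s := by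
  haveI : NeZero (2*s) := ⟨by omega⟩
  apply le_antisymm
  · rw [Subgroup.closure_le]
    rintro x ⟨i, rfl⟩
    refine ⟨dl (((i:ℕ):Z)), ?_, (gen_eq (i:ℕ)).symm ▸ (gen_eq (i:ℕ))⟩
    · intro j hj
      simp only [dl]
      rw [if_neg]
      intro hcon
      rw [hcon, ZMod.val_cast_of_lt (by omega : (i:ℕ) < 2*s)] at hj
      omega
  · rintro x ⟨v, hsupp, rfl⟩
    apply E0_mem_of_forall_dl
    intro j hj1
    have hjs : j.val < s := by
      by_contra hcon
      rw [hsupp j (by omega)] at hj1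
      exact absurd hj1 (by decide)
    have : E0 (dl j) = g0 s ^ ((⟨j.val, hjs⟩ : Fin s) : ℕ) * h0 s *
        (g0 s ^ ((⟨j.val, hjs⟩ : Fin s) : ℕ))⁻¹ := by
      rw [gen_eq]
      exact congrArg (fun t => E0 (dl t)) (ZMod.natCast_rightInverse j).symm
    rw [this]
    exact Subgroup.subset_closure ⟨⟨j.val, hjs⟩, rfl⟩

lemma pair_mem (hs : 2 ≤ s) (c : Z) :
    E0 (dl c + dl (c + (s:Z))) ∈ Subgroup.closure {a0 s, b0 s} := by
  haveI : NeZero (2*s) := ⟨by omega⟩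
  have ha : a0 s ∈ Subgroup.closure {a0 s, b0 s} := Subgroup.subset_closure (by left; rfl)
  have hb : b0 s ∈ Subgroup.closure {a0 s, b0 s} := Subgroup.subset_closure (by right; rfl)
  set k : Z := c - ((s-1:ℕ):Z) with hk
  have key := b_conj_E' (s := s) k.val (va s)
  rw [ZMod.natCast_rightInverse k] at key
  have hsh : sh k (va s) = dl c + dl (c + (s:Z)) := by
    rw [va_eq, sh_add, sh_dl, sh_dl]
    congr 2
    · rw [hk]; ring
    · rw [hk]; ring
  rw [hsh] at key
  rw [← key]
  exact mul_mem (mul_mem (pow_mem hb _) ha) (inv_mem (pow_mem hb _))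

lemma vsumV (hs : 2 ≤ s) (v : Z → ZMod 2) (hv : Vp s v) :
    v = ∑ i : Fin s, (fun jj => v ((i:ℕ):Z) * (dl ((i:ℕ):Z) jj + dl (((i:ℕ):Z) + (s:Z)) jj))
    := by
  haveI : NeZero (2*s) := ⟨by omega⟩
  funext j
  rw [Finset.sum_apply]
  have hjlt : j.val < 2*s := ZMod.val_lt j
  have hcast : ∀ n : ℕ, n < 2*s → (((n:ℕ):Z)).val = n := fun n hn => ZMod.val_cast_of_lt hn
  have hvs : ((s:ℕ):Z).val = s := hcast s (by omega)
  have haddval : ∀ i : Fin s, ((((i:ℕ):Z)) + (s:Z)).val = (i:ℕ) + s := by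
    intro i
    rw [ZMod.val_add, hcast _ (by omega), hvs]
    exact Nat.mod_eq_of_lt (by omega)
  by_cases hjs : j.val < s
  · set i0 : Fin s := ⟨j.val, hjs⟩ with hi0
    rw [Finset.sum_eq_single i0]
    · have h1 : (((i0:ℕ):Z)) = j := ZMod.natCast_rightInverse j
      rw [h1]
      have h2 : dl j j = 1 := by simp [dl]
      have h3 : dl (j + (s:Z)) j = 0 := by
        simp only [dl]
        rw [if_neg]
        intro hcon
        have := congrArg ZMod.val hcon
        rw [ZMod.val_add, hvs, Nat.mod_eq_of_lt (by omega)] at this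
        omega
      rw [h2, h3, add_zero, mul_one]
    · intro i _ hne
      have h2 : dl (((i:ℕ):Z)) j = 0 := by
        simp only [dl]
        rw [if_neg]
        intro hcon
        have := congrArg ZMod.val hcon
        rw [hcast _ (by omega)] at this
        exact hne (Fin.ext (show (i:ℕ) = j.val by omega))
      have h3 : dl ((((i:ℕ):Z)) + (s:Z)) j = 0 := by
        simp only [dl]
        rw [if_neg]
        intro hcon
        have := congrArg ZMod.val hcon
        rw [haddval i] at this
        omega
      rw [h2, h3, add_zero, mul_zero]
    · intro hni; exact absurd (Finset.mem_univ i0) hni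
  · set i0 : Fin s := ⟨j.val - s, by omega⟩ with hi0
    rw [Finset.sum_eq_single i0]
    · have h1 : (((i0:ℕ):Z)) + (s:Z) = j := by
        rw [← Nat.cast_add]
        have : (i0:ℕ) + s = j.val := by simp only [hi0]; omega
        rw [this]
        exact ZMod.natCast_rightInverse j
      have h2 : dl ((((i0:ℕ):Z)) + (s:Z)) j = 1 := by rw [h1]; simp [dl]
      have h3 : dl (((i0:ℕ):Z)) j = 0 := by
        simp only [dl]
        rw [if_neg]
        intro hcon
        have := congrArg ZMod.val hcon
        rw [hcast _ (by omega)] at this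
        omega
      rw [h2, h3, zero_add, mul_one]
      rw [← h1, hv]
    · intro i _ hne
      have h2 : dl (((i:ℕ):Z)) j = 0 := by
        simp only [dl]
        rw [if_neg]
        intro hcon
        have := congrArg ZMod.val hcon
        rw [hcast _ (by omega)] at this
        omega
      have h3 : dl ((((i:ℕ):Z)) + (s:Z)) j = 0 := by
        simp only [dl]
        rw [if_neg]
        intro hcon
        have := congrArg ZMod.val hcon
        rw [haddval i] at this
        exact hne (Fin.ext (show (i:ℕ) = j.val - s by omega))
      rw [h2, h3, add_zero, mul_zero]
    · intro hni; exact absurd (Finset.mem_univ i0) hni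

lemma Ru_eq (hs : 2 ≤ s) : Subgroup.closure {a0 s, b0 s} = Rsub s hs := by
  haveI : NeZero (2*s) := ⟨by omega⟩
  apply le_antisymm
  · rw [Subgroup.closure_le]
    rintro x (rfl | rfl)
    · exact ⟨va s, 0, Vp_va, by omega, by simp [a0]⟩
    · exact ⟨0, 1, Vp_zero, by omega, by simp⟩
  · rintro x ⟨v, n, hv, hn, rfl⟩
    have hb : b0 s ∈ Subgroup.closure {a0 s, b0 s} := Subgroup.subset_closure (by right; rfl)
    apply mul_mem _ (pow_mem hb n)
    rw [vsumV hs v hv]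
    apply E0_mem_of_sum
    intro i _
    rcases z2_cases (v ((i:ℕ):Z)) with h0 | h1
    · have : (fun jj => v ((i:ℕ):Z) * (dl ((i:ℕ):Z) jj + dl (((i:ℕ):Z) + (s:Z)) jj)) = 0 := by
        funext jj; rw [h0, zero_mul]; rfl
      rw [this, E0_zero]; exact one_mem _
    · have : (fun jj => v ((i:ℕ):Z) * (dl ((i:ℕ):Z) jj + dl (((i:ℕ):Z) + (s:Z)) jj))
          = dl ((i:ℕ):Z) + dl (((i:ℕ):Z) + (s:Z)) := by
        funext jj; rw [h1, one_mul]; rfl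
      rw [this]
      exact pair_mem hs _

end Subgroups

section Cards
variable {s : ℕ}
local notation "Z" => ZMod (2*s)
local notation "MM" => ZMod (2*s) × ZMod 2

lemma card_G (hs : 2 ≤ s) : Nat.card (Gsub s) = 2^(2*s) * (2*s) := by
  haveI : NeZero (2*s) := ⟨by omega⟩
  have hset : (Gsub s : Set (Perm MM)) =
      Set.range (fun p : (Z → ZMod 2) × Z => E0 p.1 * B0 p.2) := by
    ext x
    constructor
    · rintro ⟨v, k, rfl⟩; exact ⟨(v, k), rfl⟩
    · rintro ⟨⟨v, k⟩, rfl⟩; exact ⟨v, k, rfl⟩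
  have hinj : Function.Injective (fun p : (Z → ZMod 2) × Z => E0 p.1 * B0 p.2) := by
    rintro ⟨v, k⟩ ⟨w, l⟩ hvw
    obtain ⟨h1, h2⟩ := EB_inj hvw
    exact Prod.ext h1 h2
  calc Nat.card (Gsub s) = Nat.card ((Gsub s : Set (Perm MM))) := rfl
    _ = Nat.card (Set.range (fun p : (Z → ZMod 2) × Z => E0 p.1 * B0 p.2)) := by rw [hset]
    _ = Nat.card ((Z → ZMod 2) × Z) := Nat.card_range_of_injective hinj
    _ = 2^(2*s) * (2*s) := by
        rw [Nat.card_prod, Nat.card_fun, Nat.card_zmod, Nat.card_zmod]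

/-- extension by zero -/
def ext0 (s : ℕ) (u : Fin s → ZMod 2) : ZMod (2*s) → ZMod 2 :=
  fun j => if hc : j.val < s then u ⟨j.val, hc⟩ else 0

lemma card_H (hs : 2 ≤ s) : Nat.card (Hsub s) = 2^s := by
  haveI : NeZero (2*s) := ⟨by omega⟩
  have hset : (Hsub s : Set (Perm MM)) =
      Set.range (fun u : Fin s → ZMod 2 => E0 (ext0 s u)) := by
    ext x
    constructor
    · rintro ⟨v, hsupp, rfl⟩
      refine ⟨fun i => v (((i:ℕ):Z)), ?_⟩
      show E0 (ext0 s fun i => v (((i:ℕ):Z))) = E0 v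
      congr 1
      funext j
      simp only [ext0]
      split
      · exact congrArg v (ZMod.natCast_rightInverse j)
      · exact (hsupp j (by omega)).symm
    · rintro ⟨u, rfl⟩
      refine ⟨ext0 s u, fun j hj => ?_, rfl⟩
      simp only [ext0]
      rw [dif_neg (by omega)]
  have hinj : Function.Injective (fun u : Fin s → ZMod 2 => E0 (ext0 s u)) := by
    intro u u' huu
    have h1 : ext0 s u = ext0 s u' := E0_inj huu
    funext i
    have h2 := congrFun h1 (((i:ℕ):Z))
    have hval : ((((i:ℕ)):Z)).val = (i:ℕ) := ZMod.val_cast_of_lt (by omega)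
    simp only [ext0] at h2
    rw [dif_pos (by omega), dif_pos (by omega)] at h2
    have he : (⟨(((i:ℕ):Z)).val, by omega⟩ : Fin s) = i := Fin.ext hval
    rwa [he] at h2
  calc Nat.card (Hsub s) = Nat.card ((Hsub s : Set (Perm MM))) := rfl
    _ = Nat.card (Set.range (fun u : Fin s → ZMod 2 => E0 (ext0 s u))) := by rw [hset]
    _ = Nat.card (Fin s → ZMod 2) := Nat.card_range_of_injective hinj
    _ = 2^s := by rw [Nat.card_fun, Nat.card_zmod, Nat.card_eq_fintype_card, Fintype.card_fin]

/-- periodic extension -/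
def vex (s : ℕ) [NeZero (2*s)] (u : Fin s → ZMod 2) : ZMod (2*s) → ZMod 2 :=
  fun j => if hc : j.val < s then u ⟨j.val, hc⟩
    else u ⟨j.val - s, by have := ZMod.val_lt j; omega⟩

lemma vex_Vp (hs : 2 ≤ s) [NeZero (2*s)] (u : Fin s → ZMod 2) : Vp s (vex s u) := by
  intro j
  have hjlt : j.val < 2*s := ZMod.val_lt j
  have hadd : (j + (s:Z)).val = (j.val + s) % (2*s) := by
    rw [ZMod.val_add, ZMod.val_cast_of_lt (by omega : s < 2*s)]
  simp only [vex]
  by_cases hjs : j.val < s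
  · have h1 : (j + (s:Z)).val = j.val + s := by rw [hadd]; exact Nat.mod_eq_of_lt (by omega)
    rw [dif_neg (by omega), dif_pos hjs]
    congr 1
    exact Fin.ext (by simp [h1])
  · have h1 : (j + (s:Z)).val = j.val - s := by
      rw [hadd]
      have : j.val + s = (j.val - s) + 1 * (2*s) := by omega
      rw [this, Nat.add_mul_mod_self_right]
      exact Nat.mod_eq_of_lt (by omega)
    rw [dif_pos (by rw [h1]; omega), dif_neg hjs]
    congr 1
    exact Fin.ext (by simp [h1])

lemma vex_inj (hs : 2 ≤ s) [NeZero (2*s)] : Function.Injective (vex s) := by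
  intro u u' huu
  funext i
  have h2 := congrFun huu (((i:ℕ):Z))
  have hval : ((((i:ℕ)):Z)).val = (i:ℕ) := ZMod.val_cast_of_lt (by omega)
  simp only [vex] at h2
  rw [dif_pos (by omega), dif_pos (by omega)] at h2
  have he : (⟨(((i:ℕ):Z)).val, by omega⟩ : Fin s) = i := Fin.ext hval
  rwa [he] at h2

lemma card_R (hs : 2 ≤ s) : Nat.card (Rsub s hs) = 2^s * (2*s) := by
  haveI : NeZero (2*s) := ⟨by omega⟩
  set f : (Fin s → ZMod 2) × Fin (2*s) → Perm MM :=
    fun p => E0 (vex s p.1) * b0 s ^ ((p.2:ℕ)) with hf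
  have hset : (Rsub s hs : Set (Perm MM)) = Set.range f := by
    ext x
    constructor
    · rintro ⟨v, n, hv, hn, rfl⟩
      refine ⟨(fun i => v (((i:ℕ):Z)), ⟨n, hn⟩), ?_⟩
      simp only [hf]
      congr 1
      congr 1
      funext j
      have hjlt : j.val < 2*s := ZMod.val_lt j
      simp only [vex]
      by_cases hjs : j.val < s
      · rw [dif_pos hjs]
        exact congrArg v (ZMod.natCast_rightInverse j)
      · rw [dif_neg hjs]
        have h1 : ((((j.val - s : ℕ)):Z)) + (s:Z) = j := by
          rw [← Nat.cast_add]
          have : j.val - s + s = j.val := by omega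
          rw [this]
          exact ZMod.natCast_rightInverse j
        calc v ((((j.val - s : ℕ)):Z)) = v (((((j.val - s : ℕ)):Z)) + (s:Z)) := (hv _).symm
          _ = v j := by rw [h1]
    · rintro ⟨⟨u, n⟩, rfl⟩
      exact ⟨vex s u, (n:ℕ), vex_Vp hs u, n.isLt, rfl⟩
  have hinj : Function.Injective f := by
    rintro ⟨u, n⟩ ⟨u', p⟩ hup
    simp only [hf] at hup
    obtain ⟨c, hc⟩ := bpow_ex (s := s) (n:ℕ)
    obtain ⟨c', hc'⟩ := bpow_ex (s := s) (p:ℕ)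
    have h2 : E0 (vex s u + c) * B0 (((n:ℕ)):Z) = E0 (vex s u' + c') * B0 (((p:ℕ)):Z) := by
      rw [E0_add, E0_add, mul_assoc, mul_assoc, ← hc, ← hc', hup]
    have hnp : n = p := by
      have := (EB_inj h2).2
      have hv := congrArg ZMod.val this
      rw [ZMod.val_cast_of_lt n.isLt, ZMod.val_cast_of_lt p.isLt] at hv
      exact Fin.ext hv
    subst hnp
    have h3 : E0 (vex s u) = E0 (vex s u') := mul_right_cancel hup
    have h4 := vex_inj hs (E0_inj h3)
    rw [h4]
  calc Nat.card (Rsub s hs) = Nat.card ((Rsub s hs : Set (Perm MM))) := rfl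
    _ = Nat.card (Set.range f) := by rw [hset]
    _ = Nat.card ((Fin s → ZMod 2) × Fin (2*s)) := Nat.card_range_of_injective hinj
    _ = 2^s * (2*s) := by
        rw [Nat.card_prod, Nat.card_fun, Nat.card_zmod, Nat.card_eq_fintype_card,
          Fintype.card_fin, Nat.card_eq_fintype_card, Fintype.card_fin]

end Cards
end Stmt9Aux


lemma transversal_aux {M : Type*} [Group M] [Finite M] {G R H : Subgroup M}
    (hRG : R ≤ G) (hHG : H ≤ G) (hinter : R ⊓ H = ⊥)
    (hcard : Nat.card G = Nat.card R * Nat.card H) :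
    ∀ x ∈ G, ∃! r, r ∈ R ∧ x⁻¹ * r ∈ H := by
  have hbot : ∀ y : M, y ∈ R → y ∈ H → y = 1 := by
    intro y h1 h2
    have : y ∈ R ⊓ H := ⟨h1, h2⟩
    rwa [hinter, Subgroup.mem_bot] at this
  intro x hx
  set H' := H.subgroupOf G with hH'
  set R' := R.subgroupOf G with hR'
  have hcardR' : Nat.card R' = Nat.card R :=
    Nat.card_congr (Subgroup.subgroupOfEquivOfLe hRG).toEquiv
  have hcardH' : Nat.card H' = Nat.card H :=
    Nat.card_congr (Subgroup.subgroupOfEquivOfLe hHG).toEquiv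
  have hq : Nat.card G = Nat.card (↥G ⧸ H') * Nat.card H' :=
    Subgroup.card_eq_card_quotient_mul_card_subgroup H'
  have hHpos : 0 < Nat.card H' := Nat.card_pos
  have hqR : Nat.card (↥G ⧸ H') = Nat.card R' := by
    have h1 : Nat.card (↥G ⧸ H') * Nat.card H' = Nat.card R' * Nat.card H' := by
      rw [← hq, hcard, hcardR', hcardH']
    exact Nat.eq_of_mul_eq_mul_right hHpos h1
  set f : R' → (↥G ⧸ H') := fun r => QuotientGroup.mk r.1 with hfdef
  have hinj : Function.Injective f := by
    rintro ⟨r1, hr1⟩ ⟨r2, hr2⟩ hf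
    have h12 : r1⁻¹ * r2 ∈ H' := by
      rw [← QuotientGroup.eq]
      exact hf
    have h12R : r1⁻¹ * r2 ∈ R' := mul_mem (inv_mem hr1) hr2
    have : (r1⁻¹ * r2 : ↥G) = 1 := by
      have hA : ((r1⁻¹ * r2 : ↥G) : M) ∈ R := (Subgroup.mem_subgroupOf).1 h12R
      have hB : ((r1⁻¹ * r2 : ↥G) : M) ∈ H := (Subgroup.mem_subgroupOf).1 h12
      have := hbot _ hA hB
      exact Subtype.ext this
    exact Subtype.ext (inv_mul_eq_one.1 this)
  have hbij : Function.Bijective f :=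
    (Nat.bijective_iff_injective_and_card f).2 ⟨hinj, by rw [hqR]⟩
  obtain ⟨r', hr'⟩ := hbij.2 (QuotientGroup.mk ⟨x, hx⟩)
  refine ⟨(r'.1 : M), ⟨(Subgroup.mem_subgroupOf).1 r'.2, ?_⟩, ?_⟩
  · have : (⟨x, hx⟩ : ↥G)⁻¹ * r'.1 ∈ H' := by
      rw [← QuotientGroup.eq]
      exact hr'.symm
    exact (Subgroup.mem_subgroupOf).1 this
  · rintro y ⟨hyR, hyH⟩
    have h1 : (r'.1 : M)⁻¹ * y ∈ H := by
      have hxr : x⁻¹ * (r'.1 : M) ∈ H := by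
        have : (⟨x, hx⟩ : ↥G)⁻¹ * r'.1 ∈ H' := by
          rw [← QuotientGroup.eq]; exact hr'.symm
        exact (Subgroup.mem_subgroupOf).1 this
      have : (x⁻¹ * (r'.1 : M))⁻¹ * (x⁻¹ * y) ∈ H := mul_mem (inv_mem hxr) hyH
      simpa [mul_assoc] using this
    have h2 : (r'.1 : M)⁻¹ * y ∈ R := mul_mem (inv_mem ((Subgroup.mem_subgroupOf).1 r'.2)) hyR
    have h3 := hbot _ h2 h1
    have : y = (r'.1 : M) := by
      have := congrArg (fun t => (r'.1 : M) * t) h3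
      simpa [← mul_assoc] using this
    exact this


namespace Stmt9Aux

section Bridge
variable (s : ℕ) [NeZero (2*s)]
local notation "Z" => ZMod (2*s)
local notation "MM" => ZMod (2*s) × ZMod 2

def Pe : MM ≃ Fin (4*s) where
  toFun x := ⟨2 * x.1.val + x.2.val, by
    have h1 := ZMod.val_lt x.1
    have h2 := ZMod.val_lt x.2
    omega⟩
  invFun y := (((y.val / 2 : ℕ) : Z), ((y.val % 2 : ℕ) : ZMod 2))
  left_inv x := by
    have h2 := ZMod.val_lt x.2
    have e1 : (2 * x.1.val + x.2.val) / 2 = x.1.val := by omega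
    have e2 : (2 * x.1.val + x.2.val) % 2 = x.2.val := by omega
    show ((((2 * x.1.val + x.2.val) / 2 : ℕ) : Z),
      (((2 * x.1.val + x.2.val) % 2 : ℕ) : ZMod 2)) = x
    rw [e1, e2]
    exact Prod.ext (ZMod.natCast_rightInverse x.1) (ZMod.natCast_rightInverse x.2)
  right_inv y := by
    apply Fin.ext
    show 2 * (((y.val / 2 : ℕ) : Z)).val + (((y.val % 2 : ℕ) : ZMod 2)).val = y.val
    have hy := y.isLt
    rw [ZMod.val_cast_of_lt (by omega : y.val / 2 < 2*s),
      ZMod.val_cast_of_lt (by omega : y.val % 2 < 2)]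
    omega

def Phi : Perm MM ≃* Perm (Fin (4*s)) :=
  { Equiv.permCongr (Pe s) with
    map_mul' := fun p q => by
      ext y
      simp [Equiv.permCongr_apply, Perm.mul_apply] }

lemma Phi_apply (p : Perm MM) : Phi s p = ((Pe s).symm.trans p).trans (Pe s) := rfl

lemma Phi_swap (x y : MM) :
    Phi s (Equiv.swap x y) = Equiv.swap (Pe s x) (Pe s y) := by
  rw [Phi_apply]
  exact Equiv.symm_trans_swap_trans x y (Pe s)

lemma E0_dl_swap (c : Z) :
    E0 (dl c) = Equiv.swap ((c, 0) : MM) ((c, 1) : MM) := by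
  apply Equiv.ext
  rintro ⟨j, p⟩
  show ((j, p + dl c j) : MM) = Equiv.swap ((c, 0) : MM) ((c, 1) : MM) (j, p)
  by_cases hj : j = c
  · subst hj
    have hd : dl j j = 1 := if_pos rfl
    rcases z2_cases p with rfl | rfl
    · rw [Equiv.swap_apply_left, hd, zero_add]
    · rw [Equiv.swap_apply_right, hd, show (1 : ZMod 2) + 1 = 0 from by decide]
  · have hd : dl c j = 0 := if_neg hj
    rw [Equiv.swap_apply_of_ne_of_ne (fun hc => hj (congrArg Prod.fst hc))
      (fun hc => hj (congrArg Prod.fst hc)), hd, add_zero]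

lemma Phi_E0_dl (c : Z) :
    Phi s (E0 (dl c)) = Equiv.swap (Pe s (c, 0)) (Pe s (c, 1)) := by
  rw [E0_dl_swap, Phi_swap]

end Bridge
end Stmt9Aux


open Stmt9Aux

/-- Let `s ≥ 2`, `G = ⟨h,g⟩ ≤ Sym(4s)` with `h = (1,2)`, `g = (1,3,…,4s−1)(2,4,…,4s)`,
`H = ⟨h, h^g, …, h^{g^{s−1}}⟩`, and `R = ⟨a,b⟩` with `a = (2s−1,2s)(4s−1,4s)` and `b = gh`.
Then `R ∩ H = 1` and `|G| = |R|·|H|`, so `R` is a right transversal of `H` in `G`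
(each right coset `Hx` with `x ∈ G` contains exactly one element of `R`).

Here `Sym(4s)` is realized as `Equiv.Perm (Fin (4s))` with points `0,…,4s−1` corresponding
to `1,…,4s`. Since the paper composes permutations left-to-right while Mathlib's
`Equiv.Perm` composes right-to-left, products are reversed: the paper's `h^{g^i} = g^{-i}hg^i`
is `g^i * h * (g^i)⁻¹` here, `b = gh` is `h * g`, and the paper's condition
`r x⁻¹ ∈ H` (i.e. `r ∈ Hx`) is `x⁻¹ * r ∈ H` here. -/
theorem stmt9 (s : ℕ) (hs : 2 ≤ s)
    (h g a : Equiv.Perm (Fin (4 * s)))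
    (hh : h = Equiv.swap ⟨0, by omega⟩ ⟨1, by omega⟩)
    (hg : ∀ i : Fin (4 * s), (g i : ℕ) =
      if (i : ℕ) % 2 = 0 then (if (i : ℕ) = 4 * s - 2 then 0 else (i : ℕ) + 2)
      else (if (i : ℕ) = 4 * s - 1 then 1 else (i : ℕ) + 2))
    (ha : a = Equiv.swap ⟨2 * s - 2, by omega⟩ ⟨2 * s - 1, by omega⟩ *
      Equiv.swap ⟨4 * s - 2, by omega⟩ ⟨4 * s - 1, by omega⟩) :
    Subgroup.closure ({a, h * g} : Set (Equiv.Perm (Fin (4 * s)))) ⊓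
      Subgroup.closure {x : Equiv.Perm (Fin (4 * s)) |
        ∃ i : Fin s, x = g ^ (i : ℕ) * h * (g ^ (i : ℕ))⁻¹} = ⊥ ∧
    Nat.card ↥(Subgroup.closure ({h, g} : Set (Equiv.Perm (Fin (4 * s))))) =
      Nat.card ↥(Subgroup.closure ({a, h * g} : Set (Equiv.Perm (Fin (4 * s))))) *
      Nat.card ↥(Subgroup.closure {x : Equiv.Perm (Fin (4 * s)) |
        ∃ i : Fin s, x = g ^ (i : ℕ) * h * (g ^ (i : ℕ))⁻¹}) ∧
    ∀ x ∈ Subgroup.closure ({h, g} : Set (Equiv.Perm (Fin (4 * s)))),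
      ∃! r : Equiv.Perm (Fin (4 * s)),
        r ∈ Subgroup.closure ({a, h * g} : Set (Equiv.Perm (Fin (4 * s)))) ∧
        x⁻¹ * r ∈ Subgroup.closure {x : Equiv.Perm (Fin (4 * s)) |
          ∃ i : Fin s, x = g ^ (i : ℕ) * h * (g ^ (i : ℕ))⁻¹} := by
  haveI : NeZero (2*s) := ⟨by omega⟩
  -- identifications
  have hPe_val : ∀ (j : ZMod (2*s)) (p : ZMod 2),
      ((Pe s (j, p)) : ℕ) = 2 * j.val + p.val := fun j p => rfl
  have hPh : h = Phi s (h0 s) := by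
    rw [hh, show h0 s = E0 (dl 0) from rfl, Phi_E0_dl]
    congr 1 <;> apply Fin.ext <;>
      simp [hPe_val, ZMod.val_zero, ZMod.val_one]
  have hPg : g = Phi s (g0 s) := by
    apply Equiv.ext
    intro y
    apply Fin.ext
    rw [hg y]
    have hy := y.isLt
    have hval : ((Phi s (g0 s)) y : ℕ) =
        2 * (((y.val / 2 : ℕ) : ZMod (2*s)) + 1).val + (((y.val % 2 : ℕ) : ZMod 2)).val := by
      rfl
    rw [hval]
    have h1 : (((y.val / 2 : ℕ) : ZMod (2*s)) + 1).val = (y.val / 2 + 1) % (2*s) := by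
      rw [show (((y.val / 2 : ℕ) : ZMod (2*s)) + 1) = (((y.val / 2 + 1 : ℕ)) : ZMod (2*s))
        from by push_cast; ring]
      exact ZMod.val_natCast _ _
    have h2 : (((y.val % 2 : ℕ) : ZMod 2)).val = y.val % 2 :=
      ZMod.val_cast_of_lt (by omega)
    rw [h1, h2]
    by_cases hc : y.val / 2 + 1 < 2*s
    · rw [Nat.mod_eq_of_lt hc]
      split_ifs <;> omega
    · have he : y.val / 2 + 1 = 2*s := by omega
      rw [he, Nat.mod_self]
      split_ifs <;> omega
  have hPa : a = Phi s (a0 s) := by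
    rw [ha, show a0 s = E0 (va s) from rfl, va_eq, E0_add, map_mul, Phi_E0_dl, Phi_E0_dl]
    have hv1 : (((s-1 : ℕ) : ZMod (2*s))).val = s - 1 := ZMod.val_cast_of_lt (by omega)
    have hv2 : ((((s-1 : ℕ) : ZMod (2*s))) + (s : ZMod (2*s))).val = 2*s - 1 := by
      rw [show (((s-1 : ℕ) : ZMod (2*s))) + ((s : ℕ) : ZMod (2*s)) =
        (((s - 1 + s : ℕ)) : ZMod (2*s)) from by push_cast; ring]
      rw [ZMod.val_cast_of_lt (by omega)]
      omega
    congr 1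
    · congr 1 <;> apply Fin.ext <;>
        simp only [hPe_val, hv1, ZMod.val_zero, show ((1:ZMod 2)).val = 1 from rfl] <;> omega
    · congr 1 <;> apply Fin.ext <;>
        simp only [hPe_val, hv2, ZMod.val_zero, show ((1:ZMod 2)).val = 1 from rfl] <;> omega
  have hPb : h * g = Phi s (b0 s) := by
    rw [hPh, hPg, ← map_mul]; rfl
  set Φm := (Phi s).toMonoidHom with hΦm
  have himg3 : ⇑Φm '' {x | ∃ i : Fin s, x = g0 s ^ (i:ℕ) * h0 s * (g0 s ^ (i:ℕ))⁻¹}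
      = {x : Equiv.Perm (Fin (4 * s)) | ∃ i : Fin s, x = g ^ (i:ℕ) * h * (g ^ (i:ℕ))⁻¹} := by
    ext y
    constructor
    · rintro ⟨x, ⟨i, rfl⟩, rfl⟩
      exact ⟨i, by rw [hPh, hPg, ← map_pow, ← map_mul, ← map_inv, ← map_mul]; rfl⟩
    · rintro ⟨i, rfl⟩
      exact ⟨g0 s ^ (i:ℕ) * h0 s * (g0 s ^ (i:ℕ))⁻¹, ⟨i, rfl⟩,
        by rw [hPh, hPg, ← map_pow, ← map_mul, ← map_inv, ← map_mul]; rfl⟩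
  have hGmap : Subgroup.closure ({h, g} : Set (Equiv.Perm (Fin (4 * s))))
      = Subgroup.map Φm (Gsub s) := by
    rw [← Gu_eq hs, MonoidHom.map_closure]
    congr 1
    rw [Set.image_pair, hPh, hPg]
    rfl
  have hRmap : Subgroup.closure ({a, h * g} : Set (Equiv.Perm (Fin (4 * s))))
      = Subgroup.map Φm (Rsub s hs) := by
    rw [← Ru_eq hs, MonoidHom.map_closure]
    congr 1
    rw [Set.image_pair, hPa, hPb]
    rfl
  have hHmap : Subgroup.closure {x : Equiv.Perm (Fin (4 * s)) |
        ∃ i : Fin s, x = g ^ (i:ℕ) * h * (g ^ (i:ℕ))⁻¹}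
      = Subgroup.map Φm (Hsub s) := by
    rw [← Hu_eq hs, MonoidHom.map_closure, himg3]
  have cardmap : ∀ X : Subgroup (Equiv.Perm (ZMod (2*s) × ZMod 2)),
      Nat.card (Subgroup.map Φm X) = Nat.card X := fun X =>
    (Nat.card_congr (Subgroup.equivMapOfInjective X Φm (Phi s).injective).toEquiv).symm
  have hinf : Subgroup.closure ({a, h * g} : Set (Equiv.Perm (Fin (4 * s)))) ⊓
      Subgroup.closure {x : Equiv.Perm (Fin (4 * s)) |
        ∃ i : Fin s, x = g ^ (i:ℕ) * h * (g ^ (i:ℕ))⁻¹} = ⊥ := by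
    rw [hRmap, hHmap]
    have : Subgroup.map Φm (Rsub s hs) ⊓ Subgroup.map Φm (Hsub s)
        = Subgroup.map Φm (Rsub s hs ⊓ Hsub s) := by
      ext x
      simp only [Subgroup.mem_inf, hΦm, Subgroup.mem_map_equiv]
    rw [this, RH_bot hs, Subgroup.map_bot]
  have hcard : Nat.card ↥(Subgroup.closure ({h, g} : Set (Equiv.Perm (Fin (4 * s))))) =
      Nat.card ↥(Subgroup.closure ({a, h * g} : Set (Equiv.Perm (Fin (4 * s))))) *
      Nat.card ↥(Subgroup.closure {x : Equiv.Perm (Fin (4 * s)) |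
        ∃ i : Fin s, x = g ^ (i:ℕ) * h * (g ^ (i:ℕ))⁻¹}) := by
    rw [hGmap, hRmap, hHmap, cardmap, cardmap, cardmap, card_G hs, card_R hs, card_H hs]
    rw [two_mul s, pow_add]
    ring
  refine ⟨hinf, hcard, ?_⟩
  apply transversal_aux _ _ hinf hcard
  · rw [hRmap, hGmap]
    exact Subgroup.map_mono (Rsub_le_Gsub hs)
  · rw [hHmap, hGmap]
    exact Subgroup.map_mono Hsub_le_Gsub
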